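/- Let Q be a symmetric invertible real (2n+1)×(2n+1) matrix with Q² = I, and let g be a matrix satisfying gᵀ Q g = Q and det(g) = 1. Then adj(I − g)ᵀ Q = Q · adj(I − g) · g. -/
import Mathlib


open Matrix

theorem adjugate_transpose_Q_relation (n : ℕ)
    (Q g : Matrix (Fin (2 * n + 1)) (Fin (2 * n + 1)) ℝ)
    (hQsymm : Qᵀ = Q) (hQinv : IsUnit Q.det) (hQsq : Q * Q = 1)
    (hg : gᵀ * Q * g = Q) (hdet : g.det = 1) :
    (Matrix.adjugate (1 - g))ᵀ * Q = Q * Matrix.adjugate (1 - g) * g := by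
  set h := adjugate g with hh
  have hgh : g * h = 1 := by rw [hh, mul_adjugate, hdet, one_smul]
  have hhg : h * g = 1 := by rw [hh, adjugate_mul, hdet, one_smul]
  have hdeth : h.det = 1 := by rw [hh, det_adjugate, hdet, one_pow]
  have hadjh : adjugate h = g := by
    calc adjugate h = adjugate h * (h * g) := by rw [hhg, mul_one]
      _ = (adjugate h * h) * g := by rw [mul_assoc]
      _ = g := by rw [adjugate_mul, hdeth, one_smul, one_mul]
  have hgT : gᵀ = Q * h * Q := by
    have h1 : gᵀ * Q = Q * h := by
      have h2 := congrArg (· * h) hg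
      simpa [mul_assoc, hgh] using h2
    calc gᵀ = gᵀ * (Q * Q) := by rw [hQsq, mul_one]
      _ = (gᵀ * Q) * Q := by rw [mul_assoc]
      _ = Q * h * Q := by rw [h1]
  have key : 1 - gᵀ = Q * ((1 - h) * Q) := by
    have e : Q * ((1 - h) * Q) = Q * Q - Q * h * Q := by noncomm_ring
    rw [e, hQsq, hgT]
  have hneg : adjugate (g - 1) = adjugate (1 - g) := by
    have e : g - 1 = (-1 : ℝ) • (1 - g) := by simp
    rw [e, adjugate_smul]
    have hc : Fintype.card (Fin (2 * n + 1)) - 1 = 2 * n := by simp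
    rw [hc]
    have : ((-1 : ℝ)) ^ (2 * n) = 1 := Even.neg_one_pow ⟨n, by ring⟩
    rw [this, one_smul]
  have hadj1h : adjugate (1 - h) = adjugate (1 - g) * g := by
    have e : (1 : Matrix (Fin (2 * n + 1)) (Fin (2 * n + 1)) ℝ) - h = h * (g - 1) := by
      rw [mul_sub, hhg, mul_one]
    rw [e, adjugate_mul_distrib, hadjh, hneg]
  have hadjQ : adjugate Q = Q.det • Q := by
    calc adjugate Q = (Q * Q) * adjugate Q := by rw [hQsq, one_mul]
      _ = Q * (Q.det • 1) := by rw [mul_assoc, mul_adjugate]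
      _ = Q.det • Q := by rw [mul_smul_comm, mul_one]
  have hdetQ2 : Q.det * Q.det = 1 := by rw [← det_mul, hQsq, det_one]
  calc (adjugate (1 - g))ᵀ * Q = adjugate ((1 - g)ᵀ) * Q := by rw [adjugate_transpose]
    _ = adjugate (1 - gᵀ) * Q := by rw [transpose_sub, transpose_one]
    _ = adjugate (Q * ((1 - h) * Q)) * Q := by rw [key]
    _ = (adjugate ((1 - h) * Q) * adjugate Q) * Q := by rw [adjugate_mul_distrib]
    _ = ((adjugate Q * adjugate (1 - h)) * adjugate Q) * Q := by rw [adjugate_mul_distrib]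
    _ = ((Q.det • Q * (adjugate (1 - g) * g)) * (Q.det • Q)) * Q := by rw [hadjQ, hadj1h]
    _ = (Q.det * Q.det) • ((Q * (adjugate (1 - g) * g)) * Q * Q) := by
        simp [Matrix.smul_mul, Matrix.mul_smul, smul_smul, mul_comm]
    _ = (Q * (adjugate (1 - g) * g)) * (Q * Q) := by rw [hdetQ2, one_smul, mul_assoc]
    _ = Q * adjugate (1 - g) * g := by rw [hQsq, mul_one, mul_assoc]
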